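/- Let G = (V, E) be a finite regular undirected graph with normalized adjacency matrix A and λ = ‖A − J‖. Let f_1, …, f_n : V → [0, 1] with μ_i = E_{v uniform}[f_i(v)]. Let (Y_1, …, Y_n) be the simple random walk on G and Z_i = f_i(Y_i). Then for all k ≥ 1 and all w ∈ [n]^k with w_1 ≤ w_2 ≤ ⋯ ≤ w_k, E[Z_{w_1} Z_{w_2} ⋯ Z_{w_k}] ≤ √(μ_{w_1} μ_{w_k}) · ∏_{i=1}^{k−1} ((1 − λ^{w_{i+1} − w_i}) √(μ_{w_i} μ_{w_{i+1}}) + λ^{w_{i+1} − w_i}). -/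

import Mathlib

set_option linter.unusedSectionVars false
set_option linter.unusedTactic false
set_option maxHeartbeats 1000000

open Finset

/-- The probability of a trajectory `y` of the simple random walk of length `n` on a
regular graph with normalized adjacency matrix `A`. -/
noncomputable def walkProb {V : Type*} [Fintype V] (A : Matrix V V ℝ) {n : ℕ}
    (y : Fin n → V) : ℝ :=
  if n = 0 then 1
  else (1 / (Fintype.card V : ℝ)) *
    ∏ i : Fin n, if h : (i : ℕ) + 1 < n then A (y i) (y ⟨(i : ℕ) + 1, h⟩) else 1

/-- Expectation of a function of the trajectory of the simple random walk. -/
noncomputable def walkExp {V : Type*} [Fintype V] (A : Matrix V V ℝ) {n : ℕ}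
    (F : (Fin n → V) → ℝ) : ℝ :=
  ∑ y : Fin n → V, walkProb A y * F y

/-- The operator norm of a matrix with respect to the Euclidean norm. -/
noncomputable def opNorm {N : Type*} [Fintype N] [DecidableEq N]
    (M : Matrix N N ℝ) : ℝ :=
  ‖LinearMap.toContinuousLinearMap (Matrix.toEuclideanLin M)‖

namespace ExpAux
open scoped Matrix.Norms.L2Operator

variable {V : Type*} [Fintype V] [DecidableEq V]


section Walk

noncomputable def segF (A : Matrix V V ℝ) : ℕ → (ℕ → V → ℝ) → V → ℝ
  | 0, _ => fun _ => 1
  | (ℓ+1), g => fun v => g 0 v * (A.mulVec (segF A ℓ (fun i => g (i+1)))) v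

@[simp] lemma segF_zero (A : Matrix V V ℝ) (g : ℕ → V → ℝ) : segF A 0 g = fun _ => 1 := rfl
lemma segF_succ (A : Matrix V V ℝ) (ℓ : ℕ) (g : ℕ → V → ℝ) :
    segF A (ℓ+1) g = fun v => g 0 v * (A.mulVec (segF A ℓ (fun i => g (i+1)))) v := rfl

variable {A : Matrix V V ℝ} (hA1 : ∀ u, ∑ v, A u v = 1)

include hA1 in
lemma walk_sum : ∀ (n : ℕ) (g : ℕ → V → ℝ),
    ∑ y : Fin (n+1) → V,
      (∏ i : Fin n, A (y i.castSucc) (y i.succ)) * ∏ i : Fin (n+1), g (i : ℕ) (y i)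
    = ∑ v, segF A (n+1) g v := by
  intro n
  induction n with
  | zero =>
    intro g
    have h2 : ∀ v : V, segF A 1 g v = g 0 v := by
      intro v
      simp [segF_succ, Matrix.mulVec, dotProduct, hA1 v]
    simp only [h2]
    rw [← (Equiv.funUnique (Fin 1) V).sum_comp (fun v => g 0 v)]
    simp
  | succ n ih =>
    intro g
    rw [← (Fin.consEquiv (fun _ : Fin (n+2) => V)).sum_comp, Fintype.sum_prod_type]
    have key : ∀ v : V,
        ∑ z : Fin (n+1) → V,
          (∏ i : Fin (n+1), A (Fin.consEquiv (fun _ : Fin (n+2) => V) (v, z) i.castSucc) (Fin.consEquiv (fun _ : Fin (n+2) => V) (v, z) i.succ)) *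
            ∏ i : Fin (n+2), g (i : ℕ) (Fin.consEquiv (fun _ : Fin (n+2) => V) (v, z) i)
        = g 0 v * (A.mulVec (segF A (n+1) (fun i => g (i+1)))) v := by
      intro v
      set h : ℕ → V → ℝ := fun k => if k = 0 then (fun u => A v u * g 1 u) else g (k+1) with hh
      have hsplit : ∀ z : Fin (n+1) → V,
          (∏ i : Fin (n+1), A (Fin.consEquiv (fun _ : Fin (n+2) => V) (v, z) i.castSucc) (Fin.consEquiv (fun _ : Fin (n+2) => V) (v, z) i.succ)) *
            ∏ i : Fin (n+2), g (i : ℕ) (Fin.consEquiv (fun _ : Fin (n+2) => V) (v, z) i)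
          = g 0 v * ((∏ i : Fin n, A (z i.castSucc) (z i.succ)) *
              ∏ i : Fin (n+1), h (i : ℕ) (z i)) := by
        intro z
        have hce : (Fin.consEquiv (fun _ : Fin (n+2) => V)) (v, z) = Fin.cons v z := rfl
        rw [hce]
        rw [Fin.prod_univ_succ, Fin.prod_univ_succ, Fin.prod_univ_succ]
        simp only [Fin.cons_zero, Fin.cons_succ, Fin.castSucc_zero, Fin.succ_castSucc,
          Fin.val_zero, Fin.val_succ, hh]
        rw [Fin.prod_univ_succ]
        simp only [Fin.cons_zero, Fin.cons_succ, Fin.val_zero, Fin.val_succ,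
          ← Fin.succ_castSucc, if_true, Nat.add_one_ne_zero, ite_false]
        simp only [↓reduceIte, zero_add]
        ring
      rw [Finset.sum_congr rfl (fun z _ => hsplit z), ← Finset.mul_sum]
      congr 1
      rw [ih h]
      have hseg : ∀ u, segF A (n+1) h u = A v u * segF A (n+1) (fun i => g (i+1)) u := by
        intro u
        rw [segF_succ, segF_succ]
        have : (fun i => h (i+1)) = (fun i => g (i+2)) := by
          funext i; simp [hh]
        rw [this, hh]
        have h12 : (fun i : ℕ => g (i+1+1)) = (fun i => g (i+2)) := rfl
        simp only [if_true, h12]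
        ring
      rw [Finset.sum_congr rfl (fun u _ => hseg u)]
      rfl
    rw [Finset.sum_congr rfl (fun v _ => key v)]
    rfl

noncomputable def bvec (A : Matrix V V ℝ) (F : ℕ → V → ℝ) : (m : ℕ) → (Fin (m+1) → ℕ) → V → ℝ
  | 0, w => fun v => F (w 0) v
  | (m+1), w => fun v =>
      F (w 0) v * ((A ^ (w 1 - w 0)).mulVec (bvec A F m (fun j => w j.succ))) v

noncomputable def gf (F : ℕ → V → ℝ) {m : ℕ} (w : Fin (m+1) → ℕ) (i : ℕ) (v : V) : ℝ :=
  F i v ^ (univ.filter (fun j => w j = i)).card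

lemma gf_eq_one {F : ℕ → V → ℝ} {m : ℕ} {w : Fin (m+1) → ℕ} {i : ℕ}
    (h : ∀ j, w j ≠ i) : ∀ v, gf F w i v = 1 := by
  intro v
  unfold gf
  rw [Finset.filter_false_of_mem (fun j _ => h j), Finset.card_empty, pow_zero]

lemma gf_succ {F : ℕ → V → ℝ} {m : ℕ} (w : Fin (m+2) → ℕ) (i : ℕ) (hi : i = w 0) (v : V) :
    gf F w i v = F i v * gf F (fun j => w j.succ) i v := by
  unfold gf
  have hc : (univ.filter (fun j => w j = i)).card
      = (univ.filter (fun j : Fin (m+1) => w j.succ = i)).card + 1 := by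
    rw [Finset.card_filter, Finset.card_filter, Fin.sum_univ_succ]
    rw [if_pos hi.symm]
    omega
  rw [hc, pow_succ]
  ring

lemma gf_agree {F : ℕ → V → ℝ} {m : ℕ} (w : Fin (m+2) → ℕ) (i : ℕ) (hi : i ≠ w 0) (v : V) :
    gf F w i v = gf F (fun j => w j.succ) i v := by
  unfold gf
  have hc : (univ.filter (fun j => w j = i)).card
      = (univ.filter (fun j : Fin (m+1) => w j.succ = i)).card := by
    rw [Finset.card_filter, Finset.card_filter, Fin.sum_univ_succ,
      if_neg (fun h => hi h.symm), zero_add]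
  rw [hc]


include hA1 in
lemma segF_one : ∀ (ℓ : ℕ) (g : ℕ → V → ℝ), (∀ i v, g i v = 1) → segF A ℓ g = fun _ => 1 := by
  intro ℓ
  induction ℓ with
  | zero => intro g _; rfl
  | succ ℓ ih =>
    intro g hg
    rw [segF_succ, ih _ (fun i v => hg (i+1) v)]
    funext v
    have : A.mulVec (fun _ => (1:ℝ)) v = 1 := by
      simp [Matrix.mulVec, dotProduct, hA1 v]
    rw [hg 0 v, this, one_mul]

lemma segF_strip : ∀ (a : ℕ) (g : ℕ → V → ℝ) (k : ℕ), (∀ i, i < a → ∀ v, g i v = 1) →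
    segF A (a + k) g = (A ^ a).mulVec (segF A k (fun i => g (i + a))) := by
  intro a
  induction a with
  | zero =>
    intro g k _
    rw [zero_add, pow_zero, Matrix.one_mulVec]
    rfl
  | succ a ih =>
    intro g k hg
    have h1 : a + 1 + k = (a + k) + 1 := Nat.succ_add a k
    rw [h1, segF_succ]
    have h2 : segF A (a + k) (fun i => g (i+1))
        = (A ^ a).mulVec (segF A k (fun i => g (i + 1 + a))) := by
      have harg : (fun i => (fun i => g (i+1)) (i + a)) = (fun i => g (i + 1 + a)) := by
        funext i
        show g (i + a + 1) = g (i + 1 + a)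
        have : i + a + 1 = i + 1 + a := by omega
        rw [this]
      rw [ih (fun i => g (i+1)) k (fun i hi v => hg (i+1) (by omega) v), harg]
    funext v
    rw [hg 0 (by omega) v, one_mul, h2, Matrix.mulVec_mulVec, ← pow_succ']
    have harg2 : (fun i => g (i + 1 + a)) = (fun i => g (i + (a+1))) := by
      funext i
      have : i + 1 + a = i + (a + 1) := by omega
      rw [this]
    rw [harg2]

include hA1 in
lemma collapse : ∀ (m : ℕ) (w : Fin (m+1) → ℕ), Monotone w → ∀ (F : ℕ → V → ℝ) (n : ℕ),
    w (Fin.last m) < n →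
    segF A (n - w 0) (fun i => gf F w (i + w 0)) = bvec A F m w := by
  intro m
  induction m with
  | zero =>
    intro w _ F n hn
    have h0 : w (Fin.last 0) = w 0 := rfl
    rw [h0] at hn
    obtain ⟨k, hk⟩ : ∃ k, n - w 0 = k + 1 := ⟨n - w 0 - 1, by omega⟩
    rw [hk, segF_succ]
    funext v
    have hg0 : gf F w (0 + w 0) v = F (w 0) v := by
      rw [zero_add]
      unfold gf
      have : (univ.filter (fun j : Fin 1 => w j = w 0)) = univ := by
        refine Finset.filter_true_of_mem fun j _ => ?_
        rw [Fin.fin_one_eq_zero j]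
      rw [this]
      simp
    have hrest : segF A k (fun i => gf F w (i + 1 + w 0)) = fun _ => 1 := by
      refine segF_one hA1 k _ fun i v => ?_
      refine gf_eq_one (fun j => ?_) v
      have hj : w j = w 0 := by rw [Fin.fin_one_eq_zero j]
      omega
    rw [hg0, hrest]
    have : A.mulVec (fun _ => (1:ℝ)) v = 1 := by
      simp [Matrix.mulVec, dotProduct, hA1 v]
    rw [this, mul_one]
    rfl
  | succ m ih =>
    intro w hw F n hn
    set w' : Fin (m+1) → ℕ := fun j => w j.succ with hw'
    have hw'mono : Monotone w' := fun i j hij => hw (Fin.succ_le_succ_iff.mpr hij)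
    have hw'0 : w' 0 = w 1 := by
      show w (Fin.succ 0) = w 1
      rw [Fin.succ_zero_eq_one]
    have ha1 : w 0 ≤ w 1 := hw (by simp [Fin.le_def])
    have halast : w 0 ≤ w (Fin.last (m+1)) := hw (by simp [Fin.le_def])
    have h1last : w 1 ≤ w (Fin.last (m+1)) := hw (by simp [Fin.le_def])
    have hw'last : w' (Fin.last m) < n := by
      show w (Fin.last m).succ < n
      rw [Fin.succ_last]
      exact hn
    obtain ⟨k, hk⟩ : ∃ k, n - w 0 = k + 1 := ⟨n - w 0 - 1, by omega⟩
    rw [hk, segF_succ]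
    funext v
    have hstep1 : gf F w (0 + w 0) v = F (w 0) v * gf F w' (w 0) v := by
      rw [zero_add]; exact gf_succ w (w 0) rfl v
    have hstep2 : (fun i => gf F w (i + 1 + w 0)) = (fun i => gf F w' (i + 1 + w 0)) := by
      funext i u
      exact gf_agree w (i + 1 + w 0) (by omega) u
    rw [hstep1, hstep2]
    have hfold : (fun u => gf F w' (w 0) u *
        (A.mulVec (segF A k (fun i => gf F w' (i + 1 + w 0)))) u)
        = segF A (k + 1) (fun i => gf F w' (i + w 0)) := by
      rw [segF_succ]
      funext u
      rw [zero_add]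
    have hmain : segF A (k+1) (fun i => gf F w' (i + w 0)) =
        (A ^ (w 1 - w 0)).mulVec (bvec A F m w') := by
      have hsum : k + 1 = (w 1 - w 0) + (n - w 1) := by omega
      rw [hsum, segF_strip (w 1 - w 0) _ (n - w 1) (fun i hi u => by
        refine gf_eq_one (fun j => ?_) u
        have : w 1 ≤ w' j := by rw [← hw'0]; exact hw'mono (Fin.zero_le j)
        omega)]
      congr 1
      have harg : (fun i => (fun i => gf F w' (i + w 0)) (i + (w 1 - w 0)))
          = (fun i => gf F w' (i + w' 0)) := by
        funext i u
        show gf F w' (i + (w 1 - w 0) + w 0) u = gf F w' (i + w' 0) u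
        have hidx : i + (w 1 - w 0) + w 0 = i + w' 0 := by rw [hw'0]; omega
        rw [hidx]
      rw [harg, ← hw'0, ih w' hw'mono F n hw'last]
    show F (w 0) v * gf F w' (w 0) v * (A.mulVec (segF A k fun i => gf F w' (i + 1 + w 0))) v
        = bvec A F (m+1) w v
    have : F (w 0) v * gf F w' (w 0) v * (A.mulVec (segF A k fun i => gf F w' (i + 1 + w 0))) v
        = F (w 0) v * segF A (k+1) (fun i => gf F w' (i + w 0)) v := by
      rw [← hfold]; ring
    rw [this, hmain]
    rfl

end Walk

noncomputable def ev (x : V → ℝ) : EuclideanSpace ℝ V := (WithLp.equiv 2 (V → ℝ)).symm x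

lemma opNorm_eq (M : Matrix V V ℝ) : opNorm M = ‖M‖ := rfl
lemma ev_apply (x : V → ℝ) (v : V) : ev x v = x v := rfl
lemma ev_norm_eq (x : V → ℝ) : ‖ev x‖ = Real.sqrt (∑ v, x v ^ 2) := by
  rw [EuclideanSpace.norm_eq]
  congr 1
  refine Finset.sum_congr rfl fun v _ => ?_
  rw [ev_apply, Real.norm_eq_abs, sq_abs]
lemma ev_norm_sq (x : V → ℝ) : ‖ev x‖ ^ 2 = ∑ v, x v ^ 2 := by
  rw [ev_norm_eq, Real.sq_sqrt]; positivity
lemma ev_norm_nonneg (x : V → ℝ) : 0 ≤ ‖ev x‖ := norm_nonneg _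
lemma ev_smul (c : ℝ) (x : V → ℝ) : ev (c • x) = c • ev x := rfl
lemma mulVec_norm_le (M : Matrix V V ℝ) (x : V → ℝ) :
    ‖ev (M.mulVec x)‖ ≤ opNorm M * ‖ev x‖ :=
  Matrix.l2_opNorm_mulVec M (ev x)
lemma opNorm_nonneg (M : Matrix V V ℝ) : 0 ≤ opNorm M := norm_nonneg _
lemma opNorm_le_bound (M : Matrix V V ℝ) (C : ℝ) (hC : 0 ≤ C)
    (h : ∀ x : V → ℝ, ‖ev (M.mulVec x)‖ ≤ C * ‖ev x‖) : opNorm M ≤ C := by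
  refine ContinuousLinearMap.opNorm_le_bound _ hC fun x => ?_
  exact h ((WithLp.equiv 2 (V → ℝ)) x)
lemma opNorm_mul_le (M N' : Matrix V V ℝ) : opNorm (M * N') ≤ opNorm M * opNorm N' :=
  Matrix.l2_opNorm_mul M N'
lemma opNorm_add_le (M N' : Matrix V V ℝ) : opNorm (M + N') ≤ opNorm M + opNorm N' :=
  norm_add_le (E := Matrix V V ℝ) M N'
lemma opNorm_smul (c : ℝ) (M : Matrix V V ℝ) : opNorm (c • M) = |c| * opNorm M := by
  rw [opNorm_eq, opNorm_eq, norm_smul, Real.norm_eq_abs]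
lemma abs_dot_le (x y : V → ℝ) : |∑ v, x v * y v| ≤ ‖ev x‖ * ‖ev y‖ := by
  have h := abs_real_inner_le_norm (ev x) (ev y)
  have h2 : (inner ℝ (ev x) (ev y) : ℝ) = ∑ v, x v * y v := by
    rw [PiLp.inner_apply]
    simp [ev_apply, RCLike.inner_apply]
    exact Finset.sum_congr rfl fun _ _ => mul_comm _ _
  rwa [h2] at h
lemma opNorm_one_le : opNorm (1 : Matrix V V ℝ) ≤ 1 := by
  refine opNorm_le_bound _ 1 zero_le_one fun x => ?_
  rw [Matrix.one_mulVec, one_mul]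
lemma opNorm_pow_le (M : Matrix V V ℝ) (t : ℕ) : opNorm (M ^ t) ≤ opNorm M ^ t := by
  induction t with
  | zero => simpa [pow_zero] using opNorm_one_le
  | succ t ih =>
    calc opNorm (M ^ (t+1)) = opNorm (M ^ t * M) := by rw [pow_succ]
    _ ≤ opNorm (M ^ t) * opNorm M := opNorm_mul_le _ _
    _ ≤ opNorm M ^ t * opNorm M := mul_le_mul_of_nonneg_right ih (opNorm_nonneg M)
    _ = opNorm M ^ (t+1) := (pow_succ _ _).symm

section Main
variable [Nonempty V]
variable {A J : Matrix V V ℝ}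
  (hA0 : ∀ u v, 0 ≤ A u v)
  (hA1 : ∀ u, ∑ v, A u v = 1)
  (hA1' : ∀ v, ∑ u, A u v = 1)
  (hJ : ∀ u v, J u v = 1 / (Fintype.card V : ℝ))

lemma cardV_pos : 0 < (Fintype.card V : ℝ) := by
  exact_mod_cast Fintype.card_pos

include hJ in
lemma J_mulVec (x : V → ℝ) : J.mulVec x = fun _ => (∑ u, x u) / (Fintype.card V : ℝ) := by
  funext v
  simp only [Matrix.mulVec, dotProduct, hJ]
  rw [Finset.sum_div]
  refine Finset.sum_congr rfl fun u _ => ?_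
  ring

include hA1 in
lemma A_rowsum_pow (t : ℕ) (v : V) : ∑ u, (A ^ t) v u = 1 := by
  induction t generalizing v with
  | zero => simp [Matrix.one_apply, Finset.sum_ite_eq]
  | succ t ih =>
    rw [pow_succ]
    simp only [Matrix.mul_apply]
    rw [Finset.sum_comm]
    have : ∀ z, ∑ u, (A ^ t) v z * A z u = (A ^ t) v z := by
      intro z
      rw [← Finset.mul_sum, hA1 z, mul_one]
    rw [Finset.sum_congr rfl fun z _ => this z]
    exact ih v

include hA1' in
lemma A_colsum_pow (t : ℕ) (u : V) : ∑ v, (A ^ t) v u = 1 := by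
  induction t generalizing u with
  | zero => simp [Matrix.one_apply, Finset.sum_ite_eq']
  | succ t ih =>
    rw [pow_succ]
    simp only [Matrix.mul_apply]
    rw [Finset.sum_comm]
    have : ∀ z, ∑ v, (A ^ t) v z * A z u = A z u := by
      intro z
      rw [← Finset.sum_mul, ih z, one_mul]
    rw [Finset.sum_congr rfl fun z _ => this z]
    exact hA1' u

include hA1 hJ in
lemma A_mul_J : A * J = J := by
  ext u v
  simp only [Matrix.mul_apply, hJ]
  rw [← Finset.sum_mul, hA1 u, one_mul]

include hA1' hJ in
lemma J_mul_A : J * A = J := by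
  ext u v
  simp only [Matrix.mul_apply, hJ]
  have : ∀ z, 1 / (Fintype.card V : ℝ) * A z v = A z v * (1 / (Fintype.card V : ℝ)) := by
    intro z; ring
  rw [Finset.sum_congr rfl fun z _ => this z, ← Finset.sum_mul, hA1' v, one_mul]

include hJ in
lemma J_mul_J : J * J = J := by
  ext u v
  simp only [Matrix.mul_apply, hJ]
  rw [Finset.sum_const, Finset.card_univ, nsmul_eq_mul]
  field_simp

include hA1 hJ in
lemma pow_mul_J (t : ℕ) : A ^ t * J = J := by
  induction t with
  | zero => rw [pow_zero, one_mul]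
  | succ t ih => rw [pow_succ, mul_assoc, A_mul_J hA1 hJ, ih]

include hA1 hA1' hJ in
lemma sub_pow_eq (t : ℕ) (ht : 1 ≤ t) : (A - J) ^ t = A ^ t - J := by
  induction t with
  | zero => omega
  | succ t ih =>
    rcases Nat.eq_or_lt_of_le ht with h1 | h1
    · rw [← h1]
      simp [pow_one]
    · have ht' : 1 ≤ t := by omega
      rw [pow_succ, ih ht', Matrix.sub_mul, Matrix.mul_sub, Matrix.mul_sub,
        pow_mul_J hA1 hJ, J_mul_A hA1' hJ, J_mul_J hJ, ← pow_succ]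
      abel

-- Pythagoras-type computations
lemma sum_sq_split (x : V → ℝ) :
    ∑ v, x v ^ 2 = (∑ v, (x v - (∑ u, x u) / (Fintype.card V : ℝ)) ^ 2)
      + (Fintype.card V : ℝ) * ((∑ u, x u) / (Fintype.card V : ℝ)) ^ 2 := by
  have hN : (0:ℝ) < (Fintype.card V : ℝ) := cardV_pos
  set c : ℝ := (∑ u, x u) / (Fintype.card V : ℝ) with hc
  have hsum : ∑ u, x u = (Fintype.card V : ℝ) * c := by
    rw [hc]; field_simp
  have : ∀ v, (x v - c)^2 = x v ^2 - 2 * c * x v + c^2 := by intro v; ring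
  rw [Finset.sum_congr rfl fun v _ => this v]
  rw [Finset.sum_add_distrib, Finset.sum_sub_distrib, Finset.sum_const, Finset.card_univ,
    nsmul_eq_mul, ← Finset.mul_sum, hsum]
  ring

include hA0 hA1 hA1' in
lemma A_contract (x : V → ℝ) : ‖ev (A.mulVec x)‖ ≤ ‖ev x‖ := by
  have hsq : ‖ev (A.mulVec x)‖^2 ≤ ‖ev x‖^2 := by
    rw [ev_norm_sq, ev_norm_sq]
    have hv : ∀ v, (A.mulVec x v)^2 ≤ ∑ u, A v u * x u ^ 2 := by
      intro v
      have hcs := Finset.sum_mul_sq_le_sq_mul_sq univ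
        (fun u => Real.sqrt (A v u)) (fun u => Real.sqrt (A v u) * x u)
      have h1 : ∀ u, Real.sqrt (A v u) * (Real.sqrt (A v u) * x u) = A v u * x u := by
        intro u
        rw [← mul_assoc, Real.mul_self_sqrt (hA0 v u)]
      have h2 : ∀ u, Real.sqrt (A v u) ^ 2 = A v u := fun u => Real.sq_sqrt (hA0 v u)
      have h3 : ∀ u, (Real.sqrt (A v u) * x u)^2 = A v u * x u ^ 2 := by
        intro u
        rw [mul_pow, h2]
      rw [Finset.sum_congr rfl fun u _ => h1 u, Finset.sum_congr rfl fun u _ => h2 u,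
        Finset.sum_congr rfl fun u _ => h3 u, hA1 v, one_mul] at hcs
      exact hcs
    calc ∑ v, (A.mulVec x v)^2 ≤ ∑ v, ∑ u, A v u * x u ^ 2 :=
          Finset.sum_le_sum fun v _ => hv v
    _ = ∑ u, x u ^ 2 := by
        rw [Finset.sum_comm]
        refine Finset.sum_congr rfl fun u _ => ?_
        rw [← Finset.sum_mul, hA1' u, one_mul]
  have h0 := ev_norm_nonneg (A.mulVec x)
  have h1 := ev_norm_nonneg x
  nlinarith

include hA0 hA1 hA1' hJ in
lemma lam_le_one : opNorm (A - J) ≤ 1 := by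
  refine opNorm_le_bound _ 1 zero_le_one fun x => ?_
  rw [one_mul]
  set c : ℝ := (∑ u, x u) / (Fintype.card V : ℝ) with hc
  have key : (A - J).mulVec x = A.mulVec (fun v => x v - c) := by
    rw [Matrix.sub_mulVec]
    funext v
    have h1 : A.mulVec (fun v => x v - c) v = A.mulVec x v - A.mulVec (fun _ => c) v := by
      simp only [Matrix.mulVec, dotProduct, mul_sub]
      rw [Finset.sum_sub_distrib]
    have h2 : A.mulVec (fun _ => c) v = c := by
      simp only [Matrix.mulVec, dotProduct]
      rw [← Finset.sum_mul, hA1 v, one_mul]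
    have h3 : J.mulVec x v = c := by rw [J_mulVec hJ]
    rw [Pi.sub_apply, h1, h2, h3]
  rw [key]
  calc ‖ev (A.mulVec (fun v => x v - c))‖ ≤ ‖ev (fun v => x v - c)‖ :=
        A_contract hA0 hA1 hA1' _
  _ ≤ ‖ev x‖ := by
      have hs := sum_sq_split x
      have h4 : ‖ev (fun v => x v - c)‖^2 ≤ ‖ev x‖^2 := by
        rw [ev_norm_sq, ev_norm_sq]
        have hder : 0 ≤ (Fintype.card V : ℝ) * c^2 := by positivity
        rw [hs]
        linarith [hder]
      have h0 := ev_norm_nonneg (fun v => x v - c)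
      have h1 := ev_norm_nonneg x
      nlinarith

include hA0 hA1 hA1' hJ in
lemma proj_bound (lam : ℝ) (hlam : lam = opNorm (A - J)) (t : ℕ) :
    opNorm (A ^ t - (1 - lam ^ t) • J) ≤ lam ^ t := by
  have hlam0 : 0 ≤ lam := hlam ▸ opNorm_nonneg _
  rcases Nat.eq_zero_or_pos t with rfl | ht
  · simpa [pow_zero] using opNorm_one_le
  · set γ : ℝ := lam ^ t with hγ
    have hγ0 : 0 ≤ γ := by positivity
    set X : Matrix V V ℝ := A ^ t - J with hX
    have hXnorm : opNorm X ≤ γ := by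
      rw [hX, ← sub_pow_eq hA1 hA1' hJ t ht, hγ, hlam]
      exact opNorm_pow_le _ t
    have hM : A ^ t - (1 - γ) • J = X + γ • J := by
      rw [hX, sub_smul, one_smul]
      abel
    rw [hM]
    refine opNorm_le_bound _ γ hγ0 fun x => ?_
    set c : ℝ := (∑ u, x u) / (Fintype.card V : ℝ) with hc
    set y : V → ℝ := fun v => x v - c with hy
    have hXrow : ∀ v, ∑ u, X v u = 0 := by
      intro v
      rw [hX]
      simp only [Matrix.sub_apply]
      rw [Finset.sum_sub_distrib, A_rowsum_pow hA1 t v]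
      have : ∑ u, J v u = 1 := by
        simp only [hJ]
        rw [Finset.sum_const, Finset.card_univ, nsmul_eq_mul]
        field_simp
      rw [this]
      ring
    have hXcol : ∀ u, ∑ v, X v u = 0 := by
      intro u
      rw [hX]
      simp only [Matrix.sub_apply]
      rw [Finset.sum_sub_distrib, A_colsum_pow hA1' t u]
      have : ∑ v, J v u = 1 := by
        simp only [hJ]
        rw [Finset.sum_const, Finset.card_univ, nsmul_eq_mul]
        field_simp
      rw [this]
      ring
    have hsplit : (X + γ • J).mulVec x = fun v => X.mulVec y v + γ * c := by
      funext v
      rw [Matrix.add_mulVec, Matrix.smul_mulVec, Pi.add_apply, Pi.smul_apply,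
        J_mulVec hJ]
      have hXx : X.mulVec x v = X.mulVec y v := by
        simp only [Matrix.mulVec, dotProduct, hy]
        rw [Finset.sum_congr rfl (fun u _ => by ring :
          ∀ u ∈ univ, X v u * (x u - c) = X v u * x u - X v u * c)]
        rw [Finset.sum_sub_distrib, ← Finset.sum_mul, hXrow v]
        ring
      rw [hXx, smul_eq_mul]
    rw [hsplit]
    have hcross : ∑ v, X.mulVec y v = 0 := by
      simp only [Matrix.mulVec, dotProduct]
      rw [Finset.sum_comm]
      have : ∀ u, ∑ v, X v u * y u = 0 := by
        intro u
        rw [← Finset.sum_mul, hXcol u, zero_mul]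
      exact Finset.sum_congr rfl (fun u _ => this u) ▸ Finset.sum_const_zero
    have hXy : ‖ev (X.mulVec y)‖ ≤ γ * ‖ev y‖ :=
      le_trans (mulVec_norm_le X y) (mul_le_mul_of_nonneg_right hXnorm (ev_norm_nonneg y))
    have hnormsq : ‖ev (fun v => X.mulVec y v + γ * c)‖^2
        = ‖ev (X.mulVec y)‖^2 + (Fintype.card V : ℝ) * (γ * c)^2 := by
      rw [ev_norm_sq, ev_norm_sq]
      have : ∀ v, (X.mulVec y v + γ * c)^2
          = (X.mulVec y v)^2 + 2 * (γ * c) * (X.mulVec y v) + (γ*c)^2 := by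
        intro v; ring
      rw [Finset.sum_congr rfl fun v _ => this v, Finset.sum_add_distrib,
        Finset.sum_add_distrib, ← Finset.mul_sum, hcross, Finset.sum_const,
        Finset.card_univ, nsmul_eq_mul]
      ring
    have hxsq : ‖ev x‖^2 = ‖ev y‖^2 + (Fintype.card V : ℝ) * c^2 := by
      rw [ev_norm_sq, ev_norm_sq]
      exact sum_sq_split x
    have hfin : ‖ev (fun v => X.mulVec y v + γ * c)‖^2 ≤ (γ * ‖ev x‖)^2 := by
      rw [hnormsq]
      have h1 : ‖ev (X.mulVec y)‖^2 ≤ γ^2 * ‖ev y‖^2 := by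
        have := hXy
        have h0 := ev_norm_nonneg (X.mulVec y)
        nlinarith
      have hN : (0:ℝ) < (Fintype.card V : ℝ) := cardV_pos
      have hexp : (γ * ‖ev x‖)^2 = γ^2 * ‖ev y‖^2 + (Fintype.card V : ℝ) * (γ*c)^2 := by
        rw [mul_pow, hxsq]
        ring
      rw [hexp]
      linarith
    have h0 := ev_norm_nonneg (fun v => X.mulVec y v + γ * c)
    have h1 : 0 ≤ γ * ‖ev x‖ := mul_nonneg hγ0 (ev_norm_nonneg x)
    nlinarith

include hJ in
lemma diag_J_diag_bound (da db : V → ℝ) :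
    opNorm (Matrix.diagonal da * J * Matrix.diagonal db) ≤
      Real.sqrt ((∑ v, da v ^ 2) / (Fintype.card V : ℝ)) *
      Real.sqrt ((∑ v, db v ^ 2) / (Fintype.card V : ℝ)) := by
  have hN : (0:ℝ) < (Fintype.card V : ℝ) := cardV_pos
  set Ca := Real.sqrt ((∑ v, da v ^ 2) / (Fintype.card V : ℝ)) with hCa
  set Cb := Real.sqrt ((∑ v, db v ^ 2) / (Fintype.card V : ℝ)) with hCb
  refine opNorm_le_bound _ _ (mul_nonneg (Real.sqrt_nonneg _) (Real.sqrt_nonneg _)) fun x => ?_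
  set c : ℝ := (∑ u, db u * x u) / (Fintype.card V : ℝ) with hc
  have hmv : (Matrix.diagonal da * J * Matrix.diagonal db).mulVec x = fun v => c * da v := by
    funext v
    rw [← Matrix.mulVec_mulVec, ← Matrix.mulVec_mulVec]
    have h1 : (Matrix.diagonal db).mulVec x = fun u => db u * x u := by
      funext u
      rw [Matrix.mulVec_diagonal]
    rw [h1, J_mulVec hJ, Matrix.mulVec_diagonal]
    rw [hc]
    ring
  rw [hmv]
  have h2 : (fun v => c * da v) = c • da := by funext v; simp [smul_eq_mul]
  rw [h2, ev_smul, norm_smul, Real.norm_eq_abs]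
  have h3 : |c| ≤ ‖ev db‖ * ‖ev x‖ / (Fintype.card V : ℝ) := by
    rw [hc, abs_div, abs_of_pos hN]
    exact (div_le_div_iff_of_pos_right hN).mpr (abs_dot_le db x)
  have h4 : ‖ev da‖ = Real.sqrt (∑ v, da v ^ 2) := ev_norm_eq da
  have h5 : ‖ev db‖ = Real.sqrt (∑ v, db v ^ 2) := ev_norm_eq db
  have hCa' : Ca = Real.sqrt (∑ v, da v ^ 2) / Real.sqrt (Fintype.card V : ℝ) := by
    rw [hCa, Real.sqrt_div (by positivity)]
  have hCb' : Cb = Real.sqrt (∑ v, db v ^ 2) / Real.sqrt (Fintype.card V : ℝ) := by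
    rw [hCb, Real.sqrt_div (by positivity)]
  have hsqN : Real.sqrt (Fintype.card V : ℝ) * Real.sqrt (Fintype.card V : ℝ)
      = (Fintype.card V : ℝ) := Real.mul_self_sqrt (le_of_lt hN)
  calc |c| * ‖ev da‖ ≤ (‖ev db‖ * ‖ev x‖ / (Fintype.card V : ℝ)) * ‖ev da‖ :=
        mul_le_mul_of_nonneg_right h3 (ev_norm_nonneg da)
  _ = Ca * Cb * ‖ev x‖ := by
      rw [h4, h5, hCa', hCb']
      field_simp
      rw [Real.sq_sqrt hN.le]
      ring

lemma diag_bound (d : V → ℝ) (hd : ∀ v, 0 ≤ d v ∧ d v ≤ 1) :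
    opNorm (Matrix.diagonal d) ≤ 1 := by
  refine opNorm_le_bound _ 1 zero_le_one fun x => ?_
  rw [one_mul]
  have hmv : (Matrix.diagonal d).mulVec x = fun v => d v * x v := by
    funext v; rw [Matrix.mulVec_diagonal]
  rw [hmv]
  have hsq : ‖ev (fun v => d v * x v)‖^2 ≤ ‖ev x‖^2 := by
    rw [ev_norm_sq, ev_norm_sq]
    refine Finset.sum_le_sum fun v _ => ?_
    have h1 := (hd v).1
    have h2 := (hd v).2
    have h3 : d v ^ 2 ≤ 1 := by nlinarith
    calc (d v * x v)^2 = d v ^2 * x v ^2 := by ring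
    _ ≤ 1 * x v ^2 := mul_le_mul_of_nonneg_right h3 (sq_nonneg _)
    _ = x v ^2 := one_mul _
  have h0 := ev_norm_nonneg (fun v => d v * x v)
  have h1 := ev_norm_nonneg x
  nlinarith

include hA0 hA1 hA1' hJ in
lemma block_bound (lam : ℝ) (hlam : lam = opNorm (A - J)) (t : ℕ)
    (da db : V → ℝ) (hda : ∀ v, 0 ≤ da v ∧ da v ≤ 1) (hdb : ∀ v, 0 ≤ db v ∧ db v ≤ 1) :
    opNorm (Matrix.diagonal da * (A ^ t) * Matrix.diagonal db) ≤
      (1 - lam ^ t) * (Real.sqrt ((∑ v, da v ^ 2) / (Fintype.card V : ℝ)) *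
        Real.sqrt ((∑ v, db v ^ 2) / (Fintype.card V : ℝ))) + lam ^ t := by
  have hlam0 : 0 ≤ lam := hlam ▸ opNorm_nonneg _
  have hlam1 : lam ≤ 1 := hlam ▸ lam_le_one hA0 hA1 hA1' hJ
  have hγ1 : lam ^ t ≤ 1 := pow_le_one₀ hlam0 hlam1
  have hγ0 : 0 ≤ lam ^ t := by positivity
  have hdecomp : Matrix.diagonal da * (A ^ t) * Matrix.diagonal db
      = (1 - lam ^ t) • (Matrix.diagonal da * J * Matrix.diagonal db)
        + Matrix.diagonal da * (A ^ t - (1 - lam ^ t) • J) * Matrix.diagonal db := by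
    rw [Matrix.mul_sub, Matrix.sub_mul]
    rw [Matrix.mul_smul, Matrix.smul_mul]
    abel
  rw [hdecomp]
  have h1 := opNorm_add_le ((1 - lam ^ t) • (Matrix.diagonal da * J * Matrix.diagonal db))
    (Matrix.diagonal da * (A ^ t - (1 - lam ^ t) • J) * Matrix.diagonal db)
  have h2 : opNorm ((1 - lam ^ t) • (Matrix.diagonal da * J * Matrix.diagonal db))
      ≤ (1 - lam ^ t) * (Real.sqrt ((∑ v, da v ^ 2) / (Fintype.card V : ℝ)) *
        Real.sqrt ((∑ v, db v ^ 2) / (Fintype.card V : ℝ))) := by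
    rw [opNorm_smul, abs_of_nonneg (by linarith)]
    exact mul_le_mul_of_nonneg_left (diag_J_diag_bound hJ da db) (by linarith)
  have h3 : opNorm (Matrix.diagonal da * (A ^ t - (1 - lam ^ t) • J) * Matrix.diagonal db)
      ≤ lam ^ t := by
    calc opNorm (Matrix.diagonal da * (A ^ t - (1 - lam ^ t) • J) * Matrix.diagonal db)
        ≤ opNorm (Matrix.diagonal da * (A ^ t - (1 - lam ^ t) • J)) * opNorm (Matrix.diagonal db) :=
          opNorm_mul_le _ _
    _ ≤ (opNorm (Matrix.diagonal da) * opNorm (A ^ t - (1 - lam ^ t) • J)) *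
        opNorm (Matrix.diagonal db) :=
          mul_le_mul_of_nonneg_right (opNorm_mul_le _ _) (opNorm_nonneg _)
    _ ≤ (1 * (lam ^ t)) * 1 := by
        have hb1 := diag_bound da hda
        have hb2 := diag_bound db hdb
        have hb3 := proj_bound hA0 hA1 hA1' hJ lam hlam t
        have n2 := opNorm_nonneg (Matrix.diagonal db)
        have n3 := opNorm_nonneg (A ^ t - (1 - lam ^ t) • J)
        have s1 : opNorm (Matrix.diagonal da) * opNorm (A ^ t - (1 - lam ^ t) • J)
            ≤ 1 * lam ^ t := mul_le_mul hb1 hb3 n3 zero_le_one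
        exact mul_le_mul s1 hb2 n2 (by positivity)
    _ = lam ^ t := by ring
  linarith

noncomputable def muF (F : ℕ → V → ℝ) (i : ℕ) : ℝ := (∑ v, F i v) / (Fintype.card V : ℝ)

noncomputable def rvec (A : Matrix V V ℝ) (F : ℕ → V → ℝ) : (m : ℕ) → (Fin (m+1) → ℕ) → V → ℝ
  | 0, w => fun v => Real.sqrt (F (w 0) v) / Real.sqrt (Fintype.card V : ℝ)
  | (m+1), w => (Matrix.diagonal (fun v => Real.sqrt (F (w 0) v)) * (A ^ (w 1 - w 0)) *
      Matrix.diagonal (fun v => Real.sqrt (F (w 1) v))).mulVec (rvec A F m (fun j => w j.succ))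

lemma ev_sqrtF_norm (F0 : V → ℝ) (h : ∀ v, 0 ≤ F0 v) :
    ‖ev (fun v => Real.sqrt (F0 v) / Real.sqrt (Fintype.card V : ℝ))‖
      = Real.sqrt ((∑ v, F0 v) / (Fintype.card V : ℝ)) := by
  have hN : (0:ℝ) < (Fintype.card V : ℝ) := cardV_pos
  rw [ev_norm_eq]
  have h1 : ∀ v, (Real.sqrt (F0 v) / Real.sqrt (Fintype.card V : ℝ))^2
      = F0 v / (Fintype.card V : ℝ) := by
    intro v
    rw [div_pow, Real.sq_sqrt (h v), Real.sq_sqrt (le_of_lt hN)]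
  rw [Finset.sum_congr rfl fun v _ => h1 v, ← Finset.sum_div]

lemma bvec_eq_rvec {F : ℕ → V → ℝ} (hF : ∀ i v, 0 ≤ F i v) :
    ∀ (m : ℕ) (w : Fin (m+1) → ℕ), bvec A F m w
      = fun v => Real.sqrt (Fintype.card V : ℝ) * (Real.sqrt (F (w 0) v) * rvec A F m w v) := by
  have hN : (0:ℝ) < (Fintype.card V : ℝ) := cardV_pos
  have hsqN : Real.sqrt (Fintype.card V : ℝ) ≠ 0 := by positivity
  intro m
  induction m with
  | zero =>
    intro w
    funext v
    show F (w 0) v = Real.sqrt (Fintype.card V : ℝ) *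
      (Real.sqrt (F (w 0) v) * (Real.sqrt (F (w 0) v) / Real.sqrt (Fintype.card V : ℝ)))
    have hc : Real.sqrt (Fintype.card V : ℝ) *
        (Real.sqrt (F (w 0) v) * (Real.sqrt (F (w 0) v) / Real.sqrt (Fintype.card V : ℝ)))
        = (Real.sqrt (F (w 0) v) * Real.sqrt (F (w 0) v)) *
          (Real.sqrt (Fintype.card V : ℝ) / Real.sqrt (Fintype.card V : ℝ)) := by ring
    rw [hc, Real.mul_self_sqrt (hF _ v), div_self hsqN, mul_one]
  | succ m ih =>
    intro w
    funext v
    show F (w 0) v * ((A ^ (w 1 - w 0)).mulVec (bvec A F m (fun j => w j.succ))) v = _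
    rw [ih (fun j => w j.succ)]
    set w' : Fin (m+1) → ℕ := fun j => w j.succ with hw'
    set r : V → ℝ := rvec A F m w' with hr
    set t : ℕ := w 1 - w 0 with htdef
    set db : V → ℝ := fun u => Real.sqrt (F (w' 0) u) with hdb
    have harg : (fun u => Real.sqrt (Fintype.card V : ℝ) * (Real.sqrt (F (w' 0) u) * r u))
        = Real.sqrt (Fintype.card V : ℝ) • (fun u => db u * r u) := by
      funext u
      simp [hdb, smul_eq_mul]
    rw [harg, Matrix.mulVec_smul]
    have hRHS : rvec A F (m+1) w
        = (Matrix.diagonal (fun u => Real.sqrt (F (w 0) u)) * (A ^ t) *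
            Matrix.diagonal db).mulVec r := by
      show (Matrix.diagonal (fun u => Real.sqrt (F (w 0) u)) * (A ^ (w 1 - w 0)) *
        Matrix.diagonal (fun u => Real.sqrt (F (w 1) u))).mulVec (rvec A F m (fun j => w j.succ)) = _
      have h10 : w' 0 = w 1 := by
        show w (Fin.succ 0) = w 1
        rw [Fin.succ_zero_eq_one]
      rw [← htdef, ← hr, hdb, h10]
    rw [hRHS]
    have hmv : ((Matrix.diagonal (fun u => Real.sqrt (F (w 0) u)) * (A ^ t) *
        Matrix.diagonal db).mulVec r) v
        = Real.sqrt (F (w 0) v) * ((A ^ t).mulVec (fun u => db u * r u)) v := by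
      rw [← Matrix.mulVec_mulVec, ← Matrix.mulVec_mulVec]
      rw [Matrix.mulVec_diagonal]
      congr 2
      funext u
      rw [Matrix.mulVec_diagonal]
    rw [hmv, Pi.smul_apply, smul_eq_mul]
    have hself := Real.mul_self_sqrt (hF (w 0) v)
    set X : ℝ := ((A ^ t).mulVec fun u => db u * r u) v with hX
    calc F (w 0) v * (Real.sqrt (Fintype.card V : ℝ) * X)
        = (Real.sqrt (F (w 0) v) * Real.sqrt (F (w 0) v)) *
          (Real.sqrt (Fintype.card V : ℝ) * X) := by rw [hself]
    _ = Real.sqrt (Fintype.card V : ℝ) * (Real.sqrt (F (w 0) v) *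
          (Real.sqrt (F (w 0) v) * X)) := by ring

include hA0 hA1 hA1' hJ in
lemma rvec_norm_le {F : ℕ → V → ℝ} (hF : ∀ i v, 0 ≤ F i v ∧ F i v ≤ 1)
    (lam : ℝ) (hlam : lam = opNorm (A - J)) :
    ∀ (m : ℕ) (w : Fin (m+1) → ℕ),
    ‖ev (rvec A F m w)‖ ≤
      (∏ i : Fin m, ((1 - lam ^ (w i.succ - w i.castSucc)) *
          Real.sqrt (muF (V := V) F (w i.castSucc) * muF (V := V) F (w i.succ)) +
        lam ^ (w i.succ - w i.castSucc))) * Real.sqrt (muF (V := V) F (w (Fin.last m))) := by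
  have hlam0 : 0 ≤ lam := hlam ▸ opNorm_nonneg _
  have hlam1 : lam ≤ 1 := hlam ▸ lam_le_one hA0 hA1 hA1' hJ
  have hN : (0:ℝ) < (Fintype.card V : ℝ) := cardV_pos
  have hmu0 : ∀ i, 0 ≤ muF (V := V) F i := by
    intro i
    unfold muF
    have h0 : 0 ≤ ∑ v, F i v := Finset.sum_nonneg fun v _ => (hF i v).1
    exact div_nonneg h0 (le_of_lt hN)
  have hfac0 : ∀ a b : ℕ, 0 ≤ (1 - lam ^ (b - a)) *
      Real.sqrt (muF (V := V) F a * muF (V := V) F b) + lam ^ (b - a) := by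
    intro a b
    have h1 : lam ^ (b - a) ≤ 1 := pow_le_one₀ hlam0 hlam1
    have h2 : 0 ≤ lam ^ (b - a) := by positivity
    have h3 : 0 ≤ Real.sqrt (muF (V := V) F a * muF (V := V) F b) := Real.sqrt_nonneg _
    nlinarith
  intro m
  induction m with
  | zero =>
    intro w
    rw [Fin.prod_univ_zero, one_mul]
    have : rvec A F 0 w = fun v => Real.sqrt (F (w 0) v) / Real.sqrt (Fintype.card V : ℝ) := rfl
    rw [this, ev_sqrtF_norm _ (fun v => (hF (w 0) v).1)]
    exact le_of_eq rfl
  | succ m ih =>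
    intro w
    set w' : Fin (m+1) → ℕ := fun j => w j.succ with hw'
    have h10 : w' 0 = w 1 := by
      show w (Fin.succ 0) = w 1
      rw [Fin.succ_zero_eq_one]
    set t : ℕ := w 1 - w 0 with htdef
    set da : V → ℝ := fun u => Real.sqrt (F (w 0) u) with hda
    set db : V → ℝ := fun u => Real.sqrt (F (w 1) u) with hdb
    have hrv : rvec A F (m+1) w
        = (Matrix.diagonal da * (A ^ t) * Matrix.diagonal db).mulVec (rvec A F m w') := rfl
    have hdaB : ∀ v, 0 ≤ da v ∧ da v ≤ 1 := by
      intro v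
      constructor
      · exact Real.sqrt_nonneg _
      · rw [hda]
        rw [show (1:ℝ) = Real.sqrt 1 from (Real.sqrt_one).symm]
        exact Real.sqrt_le_sqrt (hF (w 0) v).2
    have hdbB : ∀ v, 0 ≤ db v ∧ db v ≤ 1 := by
      intro v
      constructor
      · exact Real.sqrt_nonneg _
      · rw [hdb]
        rw [show (1:ℝ) = Real.sqrt 1 from (Real.sqrt_one).symm]
        exact Real.sqrt_le_sqrt (hF (w 1) v).2
    have hblock := block_bound hA0 hA1 hA1' hJ lam hlam t da db hdaB hdbB
    have hda2 : (∑ v, da v ^ 2) = ∑ v, F (w 0) v := by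
      refine Finset.sum_congr rfl fun v _ => ?_
      rw [hda, Real.sq_sqrt (hF (w 0) v).1]
    have hdb2 : (∑ v, db v ^ 2) = ∑ v, F (w 1) v := by
      refine Finset.sum_congr rfl fun v _ => ?_
      rw [hdb, Real.sq_sqrt (hF (w 1) v).1]
    have hsqmu : Real.sqrt ((∑ v, da v ^ 2) / (Fintype.card V : ℝ)) *
        Real.sqrt ((∑ v, db v ^ 2) / (Fintype.card V : ℝ))
        = Real.sqrt (muF (V := V) F (w 0) * muF (V := V) F (w 1)) := by
      rw [hda2, hdb2, ← Real.sqrt_mul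
        (div_nonneg (Finset.sum_nonneg fun v _ => (hF (w 0) v).1) (le_of_lt hN))]
      rfl
    rw [hsqmu] at hblock
    have hchain : ‖ev (rvec A F (m+1) w)‖ ≤
        ((1 - lam ^ t) * Real.sqrt (muF (V := V) F (w 0) * muF (V := V) F (w 1)) + lam ^ t) *
          ‖ev (rvec A F m w')‖ := by
      rw [hrv]
      exact le_trans (mulVec_norm_le _ _)
        (mul_le_mul_of_nonneg_right hblock (ev_norm_nonneg _))
    have hIH := ih w'
    have hκ0 : 0 ≤ (1 - lam ^ t) * Real.sqrt (muF (V := V) F (w 0) * muF (V := V) F (w 1))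
        + lam ^ t := by
      have := hfac0 (w 0) (w 1)
      rw [← htdef] at this
      exact this
    have hstep : ‖ev (rvec A F (m+1) w)‖ ≤
        ((1 - lam ^ t) * Real.sqrt (muF (V := V) F (w 0) * muF (V := V) F (w 1)) + lam ^ t) *
        ((∏ i : Fin m, ((1 - lam ^ (w' i.succ - w' i.castSucc)) *
          Real.sqrt (muF (V := V) F (w' i.castSucc) * muF (V := V) F (w' i.succ)) +
            lam ^ (w' i.succ - w' i.castSucc))) * Real.sqrt (muF (V := V) F (w' (Fin.last m)))) :=
      le_trans hchain (mul_le_mul_of_nonneg_left hIH hκ0)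
    refine le_trans hstep (le_of_eq ?_)
    rw [Fin.prod_univ_succ]
    have hterm0 : ((1 - lam ^ (w (Fin.succ 0) - w ((0: Fin (m+1)).castSucc))) *
        Real.sqrt (muF (V := V) F (w ((0: Fin (m+1)).castSucc)) * muF (V := V) F (w (Fin.succ 0))) +
          lam ^ (w (Fin.succ 0) - w ((0: Fin (m+1)).castSucc)))
        = ((1 - lam ^ t) * Real.sqrt (muF (V := V) F (w 0) * muF (V := V) F (w 1)) + lam ^ t) := by
      rw [Fin.succ_zero_eq_one, Fin.castSucc_zero, htdef]
    have hprodeq : (∏ i : Fin m, ((1 - lam ^ (w (i.succ).succ - w (i.succ).castSucc)) *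
        Real.sqrt (muF (V := V) F (w (i.succ).castSucc) * muF (V := V) F (w (i.succ).succ)) +
          lam ^ (w (i.succ).succ - w (i.succ).castSucc)))
        = ∏ i : Fin m, ((1 - lam ^ (w' i.succ - w' i.castSucc)) *
          Real.sqrt (muF (V := V) F (w' i.castSucc) * muF (V := V) F (w' i.succ)) +
            lam ^ (w' i.succ - w' i.castSucc)) := by
      refine Finset.prod_congr rfl fun i _ => ?_
      have e1 : w (i.succ).castSucc = w' i.castSucc := by
        show w (i.succ).castSucc = w (i.castSucc).succ
        rw [Fin.succ_castSucc]
      have e2 : w (i.succ).succ = w' i.succ := rfl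
      rw [e1, e2]
    have hlasteq : w (Fin.last (m+1)) = w' (Fin.last m) := by
      show w (Fin.last (m+1)) = w (Fin.last m).succ
      rw [Fin.succ_last]
    rw [hterm0, hprodeq, hlasteq]
    ring


end Main
end ExpAux
open ExpAux in
theorem expander_monomial_bound
    {V : Type*} [Fintype V] [DecidableEq V] [Nonempty V]
    (G : SimpleGraph V) [DecidableRel G.Adj] (d : ℕ) (hd : 0 < d)
    (hreg : G.IsRegularOfDegree d)
    (A : Matrix V V ℝ)
    (hA : ∀ u v, A u v = if G.Adj u v then (1 : ℝ) / d else 0)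
    (J : Matrix V V ℝ) (hJ : ∀ u v, J u v = 1 / (Fintype.card V : ℝ))
    (lam : ℝ) (hlam : lam = opNorm (A - J))
    (n : ℕ) (f : Fin n → V → ℝ) (hf : ∀ i v, f i v ∈ Set.Icc (0 : ℝ) 1)
    (μ : Fin n → ℝ) (hμ : ∀ i, μ i = (∑ v, f i v) / (Fintype.card V : ℝ))
    (m : ℕ) (w : Fin (m + 1) → Fin n) (hw : Monotone w) :
    walkExp A (fun y => ∏ j, f (w j) (y (w j))) ≤
      Real.sqrt (μ (w 0) * μ (w (Fin.last m))) *
        ∏ i : Fin m,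
          ((1 - lam ^ ((w i.succ : ℕ) - (w i.castSucc : ℕ))) *
              Real.sqrt (μ (w i.castSucc) * μ (w i.succ)) +
            lam ^ ((w i.succ : ℕ) - (w i.castSucc : ℕ))) := by
  classical
  have hNpos : (0:ℝ) < (Fintype.card V : ℝ) := by exact_mod_cast Fintype.card_pos
  have hdR : ((d:ℝ)) ≠ 0 := by exact_mod_cast Nat.pos_iff_ne_zero.mp hd
  -- Facts about A
  have hA0 : ∀ u v, 0 ≤ A u v := by
    intro u v
    rw [hA]
    split
    · positivity
    · exact le_refl 0
  have hAsym : ∀ u v, A u v = A v u := by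
    intro u v
    rw [hA, hA]
    by_cases h : G.Adj u v
    · rw [if_pos h, if_pos (G.adj_symm h)]
    · rw [if_neg h, if_neg (fun h' => h (G.adj_symm h'))]
  have hA1 : ∀ u, ∑ v, A u v = 1 := by
    intro u
    rw [Finset.sum_congr rfl fun v _ => hA u v]
    rw [Finset.sum_ite, Finset.sum_const, Finset.sum_const_zero, add_zero, nsmul_eq_mul]
    have hfil : (univ.filter (fun v => G.Adj u v)).card = d := by
      have h1 : univ.filter (fun v => G.Adj u v) = G.neighborFinset u := by
        ext v
        simp [SimpleGraph.mem_neighborFinset]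
      rw [h1]
      exact hreg u
    rw [hfil]
    field_simp
  have hA1' : ∀ v, ∑ u, A u v = 1 := by
    intro v
    rw [Finset.sum_congr rfl fun u _ => hAsym u v]
    exact hA1 v
  -- positivity of n
  obtain ⟨n', rfl⟩ : ∃ n', n = n' + 1 := ⟨n - 1, by have := (w 0).pos; omega⟩
  -- setup
  set F : ℕ → V → ℝ := fun i v => if h : i < n' + 1 then f ⟨i, h⟩ v else 1 with hFdef
  set wN : Fin (m+1) → ℕ := fun j => (w j : ℕ) with hwNdef
  have hwNmono : Monotone wN := fun i j hij => hw hij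
  have hFi : ∀ (i : Fin (n'+1)), F (i : ℕ) = f i := by
    intro i
    funext v
    rw [hFdef]
    simp only [Fin.is_lt, dif_pos, Fin.eta]
  have hFw : ∀ j, F (wN j) = f (w j) := fun j => hFi (w j)
  have hF : ∀ i v, 0 ≤ F i v ∧ F i v ≤ 1 := by
    intro i v
    simp only [hFdef]
    split
    · exact ⟨(hf _ v).1, (hf _ v).2⟩
    · exact ⟨zero_le_one, le_refl 1⟩
  have hF0 : ∀ i v, 0 ≤ F i v := fun i v => (hF i v).1
  have hmuw : ∀ j : Fin (m+1), muF (V := V) F (wN j) = μ (w j) := by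
    intro j
    rw [hμ]
    unfold ExpAux.muF
    rw [hFw j]
  -- Step 1: walkExp as a segF sum
  have hprob : ∀ y : Fin (n'+1) → V, walkProb A y
      = (1 / (Fintype.card V : ℝ)) * ∏ i : Fin n', A (y i.castSucc) (y i.succ) := by
    intro y
    rw [walkProb, if_neg (Nat.succ_ne_zero n')]
    congr 1
    rw [Fin.prod_univ_castSucc]
    have h2 : (if h : ((Fin.last n' : Fin (n'+1)) : ℕ) + 1 < n'+1 then
        A (y (Fin.last n')) (y ⟨((Fin.last n' : Fin (n'+1)) : ℕ)+1, h⟩) else 1) = 1 := by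
      rw [dif_neg]
      simp [Fin.val_last]
    rw [h2, mul_one]
    refine Finset.prod_congr rfl fun i _ => ?_
    have hc : ((i.castSucc : Fin (n'+1)) : ℕ) + 1 < n' + 1 := by
      simp only [Fin.coe_castSucc]
      omega
    rw [dif_pos hc]
    have harg : (⟨((i.castSucc : Fin (n'+1)) : ℕ) + 1, hc⟩ : Fin (n'+1)) = i.succ := by
      ext
      simp
    rw [harg]
  have hGy : ∀ y : Fin (n'+1) → V,
      (∏ j, f (w j) (y (w j))) = ∏ i : Fin (n'+1), ExpAux.gf F wN (i : ℕ) (y i) := by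
    intro y
    rw [← Finset.prod_fiberwise univ (fun j => w j) (fun j => f (w j) (y (w j)))]
    refine Finset.prod_congr rfl fun i _ => ?_
    have hff : ∀ j ∈ univ.filter (fun j => w j = i), f (w j) (y (w j)) = F (i:ℕ) (y i) := by
      intro j hj
      rw [Finset.mem_filter] at hj
      rw [hj.2, hFi i]
    rw [Finset.prod_congr rfl hff, Finset.prod_const]
    unfold ExpAux.gf
    congr 2
    ext j
    simp only [Finset.mem_filter, Finset.mem_univ, true_and, hwNdef]
    exact (Fin.val_eq_val (w j) i).symm
  have hexp : walkExp A (fun y => ∏ j, f (w j) (y (w j)))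
      = (1 / (Fintype.card V : ℝ)) * ∑ v, ExpAux.segF A (n'+1) (ExpAux.gf F wN) v := by
    rw [walkExp, ← ExpAux.walk_sum hA1 n' (ExpAux.gf F wN), Finset.mul_sum]
    refine Finset.sum_congr rfl fun y _ => ?_
    rw [hprob y, hGy y]
    ring
  -- Step 2: strip and collapse
  have hpre : ∀ i, i < wN 0 → ∀ v, ExpAux.gf F wN i v = 1 := by
    intro i hi v
    refine ExpAux.gf_eq_one (fun j => ?_) v
    have := hwNmono (Fin.zero_le j)
    omega
  have hstrip := ExpAux.segF_strip (A := A) (wN 0) (ExpAux.gf F wN) (n' + 1 - wN 0) hpre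
  have hsplit : wN 0 + (n' + 1 - wN 0) = n' + 1 := by
    have := (w 0).is_lt
    have : wN 0 < n' + 1 := this
    omega
  rw [hsplit] at hstrip
  have hcol := ExpAux.collapse hA1 m wN hwNmono F (n'+1) (by
    have := (w (Fin.last m)).is_lt
    exact this)
  have hsum1 : ∀ (x : V → ℝ), ∑ v, (A ^ (wN 0)).mulVec x v = ∑ v, x v := by
    intro x
    simp only [Matrix.mulVec, dotProduct]
    rw [Finset.sum_comm]
    refine Finset.sum_congr rfl fun u _ => ?_
    rw [← Finset.sum_mul, ExpAux.A_colsum_pow hA1' _ u, one_mul]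
  have hexp2 : walkExp A (fun y => ∏ j, f (w j) (y (w j)))
      = (1 / (Fintype.card V : ℝ)) * ∑ v, ExpAux.bvec A F m wN v := by
    rw [hexp, hstrip, hsum1, hcol]
  -- Step 3: rvec form
  have hrv := ExpAux.bvec_eq_rvec (A := A) hF0 m wN
  have hsqN : Real.sqrt (Fintype.card V : ℝ) ≠ 0 := by positivity
  have hexp3 : walkExp A (fun y => ∏ j, f (w j) (y (w j)))
      = ∑ v, (Real.sqrt (F (wN 0) v) / Real.sqrt (Fintype.card V : ℝ)) *
          ExpAux.rvec A F m wN v := by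
    rw [hexp2, hrv, Finset.mul_sum]
    refine Finset.sum_congr rfl fun v _ => ?_
    calc (1 / (Fintype.card V : ℝ)) *
          (Real.sqrt (Fintype.card V : ℝ) * (Real.sqrt (F (wN 0) v) * rvec A F m wN v))
        = (Real.sqrt (Fintype.card V : ℝ) / (Fintype.card V : ℝ)) *
          (Real.sqrt (F (wN 0) v) * rvec A F m wN v) := by ring
    _ = (1 / Real.sqrt (Fintype.card V : ℝ)) *
          (Real.sqrt (F (wN 0) v) * rvec A F m wN v) := by rw [Real.sqrt_div_self']
    _ = (Real.sqrt (F (wN 0) v) / Real.sqrt (Fintype.card V : ℝ)) * rvec A F m wN v := by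
          ring
  -- Step 4: Cauchy-Schwarz and the norm bound
  have hCS : walkExp A (fun y => ∏ j, f (w j) (y (w j)))
      ≤ ‖ExpAux.ev (fun v => Real.sqrt (F (wN 0) v) / Real.sqrt (Fintype.card V : ℝ))‖ *
        ‖ExpAux.ev (ExpAux.rvec A F m wN)‖ := by
    rw [hexp3]
    exact le_trans (le_abs_self _) (ExpAux.abs_dot_le _ _)
  have hnorm1 : ‖ExpAux.ev (fun v => Real.sqrt (F (wN 0) v) / Real.sqrt (Fintype.card V : ℝ))‖
      = Real.sqrt (muF (V := V) F (wN 0)) :=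
    ExpAux.ev_sqrtF_norm _ (fun v => hF0 (wN 0) v)
  have hnorm2 := ExpAux.rvec_norm_le hA0 hA1 hA1' hJ hF lam hlam m wN
  have hmu0 : ∀ i, 0 ≤ muF (V := V) F i := by
    intro i
    unfold ExpAux.muF
    exact div_nonneg (Finset.sum_nonneg fun v _ => hF0 i v) (le_of_lt hNpos)
  have hbound : walkExp A (fun y => ∏ j, f (w j) (y (w j)))
      ≤ Real.sqrt (muF (V := V) F (wN 0)) *
        ((∏ i : Fin m, ((1 - lam ^ (wN i.succ - wN i.castSucc)) *
          Real.sqrt (muF (V := V) F (wN i.castSucc) * muF (V := V) F (wN i.succ)) +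
            lam ^ (wN i.succ - wN i.castSucc))) *
          Real.sqrt (muF (V := V) F (wN (Fin.last m)))) := by
    refine le_trans hCS ?_
    rw [hnorm1]
    exact mul_le_mul_of_nonneg_left hnorm2 (Real.sqrt_nonneg _)
  -- Step 5: rearrange and convert μ's
  refine le_trans hbound (le_of_eq ?_)
  have hre : Real.sqrt (muF (V := V) F (wN 0)) *
      ((∏ i : Fin m, ((1 - lam ^ (wN i.succ - wN i.castSucc)) *
        Real.sqrt (muF (V := V) F (wN i.castSucc) * muF (V := V) F (wN i.succ)) +
          lam ^ (wN i.succ - wN i.castSucc))) *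
        Real.sqrt (muF (V := V) F (wN (Fin.last m))))
      = (Real.sqrt (muF (V := V) F (wN 0)) * Real.sqrt (muF (V := V) F (wN (Fin.last m)))) *
        (∏ i : Fin m, ((1 - lam ^ (wN i.succ - wN i.castSucc)) *
          Real.sqrt (muF (V := V) F (wN i.castSucc) * muF (V := V) F (wN i.succ)) +
            lam ^ (wN i.succ - wN i.castSucc))) := by ring
  rw [hre, ← Real.sqrt_mul (hmu0 (wN 0)), hmuw 0, hmuw (Fin.last m)]
  congr 1
  refine Finset.prod_congr rfl fun i _ => ?_
  rw [hmuw i.castSucc, hmuw i.succ]
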